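/- Let (Y_n)_{n ≥ k−1} be a sequence of real random variables and L an independent integer-valued random variable with P(L ≥ n) > 0 for all n ≥ k. Suppose E[Y_n] = g_n for each n, g_n → f as n → ∞, and Σ_{n=k}^{∞} E[|Y_n − Y_{n−1}|]/P(L ≥ n) < ∞. Then the randomly truncated telescopic sum Ψ = Y_{k−1} + Σ_{n=k}^{L} (Y_n − Y_{n−1})/P(L ≥ n) satisfies E[Ψ] = f. -/

import Mathlib

open MeasureTheory Filter Finset

theorem stmt11 {Ω : Type*} [MeasurableSpace Ω] (μ : Measure Ω) [IsProbabilityMeasure μ]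
    (Y : ℕ → Ω → ℝ) (L : Ω → ℕ) (k : ℕ) (g : ℕ → ℝ) (f : ℝ)
    (hYmeas : ∀ n, Measurable (Y n)) (hLmeas : Measurable L)
    (hindep : ProbabilityTheory.IndepFun L (fun ω n => Y n ω) μ)
    (hpos : ∀ n, k ≤ n → 0 < (μ {ω | n ≤ L ω}).toReal)
    (hint : ∀ n, Integrable (Y n) μ)
    (hE : ∀ n, ∫ ω, Y n ω ∂μ = g n)
    (hlim : Tendsto g atTop (nhds f))
    (hsum : Summable (fun n : ℕ => if k ≤ n then
        (∫ ω, |Y n ω - Y (n - 1) ω| ∂μ) / (μ {ω | n ≤ L ω}).toReal else 0)) :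
    ∫ ω, (Y (k - 1) ω + ∑ n ∈ Finset.Icc k (L ω),
        (Y n ω - Y (n - 1) ω) / (μ {ω' | n ≤ L ω'}).toReal) ∂μ = f := by
  classical
  set p : ℕ → ℝ := fun n => (μ {ω | n ≤ L ω}).toReal with hp
  set D : ℕ → Ω → ℝ := fun n ω => Y n ω - Y (n - 1) ω with hD
  set a : ℕ → ℝ := fun n => if k ≤ n then (∫ ω, |D n ω| ∂μ) / p n else 0 with ha
  -- the indexed family whose tsum is the integrand
  set F : ℕ → Ω → ℝ := fun n ω =>
    (if n = 0 then Y (k - 1) ω else 0) +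
      (if k ≤ n ∧ n ≤ L ω then D n ω / p n else 0) with hF
  have hsetmeas : ∀ n : ℕ, MeasurableSet {ω | n ≤ L ω} := fun n =>
    hLmeas (measurableSet_le measurable_const measurable_id)
  have hDint : ∀ n, Integrable (D n) μ := fun n => (hint n).sub (hint (n - 1))
  have hp1 : ∀ n, p n ≤ 1 := fun n => by
    simpa using ENNReal.toReal_mono (by simp) (prob_le_one (μ := μ) (s := {ω | n ≤ L ω}))
  -- second summand as indicator
  have hsecond : ∀ (n : ℕ) (ω : Ω), (if k ≤ n ∧ n ≤ L ω then D n ω / p n else 0) =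
      Set.indicator {ω' | n ≤ L ω'} (fun ω' => if k ≤ n then D n ω' / p n else 0) ω := by
    intro n ω
    by_cases h1 : n ≤ L ω <;> by_cases h2 : k ≤ n <;>
      simp [Set.indicator_apply, h1, h2]
  have hI2 : ∀ n : ℕ, Integrable (fun ω => if k ≤ n ∧ n ≤ L ω then D n ω / p n else 0) μ := by
    intro n
    simp only [hsecond]
    refine Integrable.indicator ?_ (hsetmeas n)
    by_cases h2 : k ≤ n <;> simp [h2, (hDint n).div_const]
  have hFint : ∀ n, Integrable (F n) μ := by
    intro n
    apply Integrable.add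
    · by_cases h : n = 0 <;> simp [h, hint (k - 1)]
    · exact hI2 n
  -- pointwise norm bound for second summand
  have hnorm2 : ∀ n, (∫ ω, ‖if k ≤ n ∧ n ≤ L ω then D n ω / p n else 0‖ ∂μ) ≤ a n := by
    intro n
    by_cases h2 : k ≤ n
    · have hpn := hpos n h2
      have : ∀ ω, ‖if k ≤ n ∧ n ≤ L ω then D n ω / p n else 0‖ ≤ |D n ω| / p n := by
        intro ω
        by_cases h1 : n ≤ L ω
        · simp only [h1, h2, and_self, if_true, Real.norm_eq_abs, abs_div,
            abs_of_pos hpn, abs_of_pos (show (0:ℝ) < p n from hpn), le_refl]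
        · simp only [h1, and_false, if_false, norm_zero]
          positivity
      calc (∫ ω, ‖if k ≤ n ∧ n ≤ L ω then D n ω / p n else 0‖ ∂μ)
          ≤ ∫ ω, |D n ω| / p n ∂μ := by
            refine integral_mono ?_ (((hDint n).abs).div_const _) this
            · exact (hI2 n).norm
        _ = a n := by rw [integral_div, ha]; simp [h2]
    · simp only [h2, false_and, if_false, norm_zero, integral_zero, ha, if_neg h2, le_refl]
  -- summability of integrals of norms
  have hnormsum : Summable (fun n => ∫ ω, ‖F n ω‖ ∂μ) := by
    have hb : Summable (fun n : ℕ => (if n = 0 then ∫ ω, ‖Y (k - 1) ω‖ ∂μ else 0) + a n) :=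
      Summable.add ((hasSum_ite_eq 0 _).summable) hsum
    refine hb.of_nonneg_of_le (fun n => integral_nonneg fun ω => norm_nonneg _) ?_
    intro n
    calc (∫ ω, ‖F n ω‖ ∂μ)
        ≤ ∫ ω, (‖if n = 0 then Y (k - 1) ω else 0‖ +
            ‖if k ≤ n ∧ n ≤ L ω then D n ω / p n else 0‖) ∂μ := by
          refine integral_mono (hFint n).norm ?_ (fun ω => norm_add_le _ _)
          apply Integrable.add
          · by_cases h : n = 0 <;> simp [h, (hint (k - 1)).norm, (hint (k - 1)).abs]
          · exact (hI2 n).norm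
      _ = (∫ ω, ‖if n = 0 then Y (k - 1) ω else 0‖ ∂μ) +
            ∫ ω, ‖if k ≤ n ∧ n ≤ L ω then D n ω / p n else 0‖ ∂μ := by
          apply integral_add
          · by_cases h : n = 0 <;> simp [h, (hint (k - 1)).norm, (hint (k - 1)).abs]
          · exact (hI2 n).norm
      _ ≤ (if n = 0 then ∫ ω, ‖Y (k - 1) ω‖ ∂μ else 0) + a n := by
          gcongr
          · by_cases h : n = 0 <;> simp [h]
          · exact hnorm2 n
  -- the integrand equals the tsum of F
  have hpt : ∀ ω, (Y (k - 1) ω + ∑ n ∈ Finset.Icc k (L ω), D n ω / p n) = ∑' n, F n ω := by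
    intro ω
    have h1 : HasSum (fun n : ℕ => if n = 0 then Y (k - 1) ω else 0) (Y (k - 1) ω) :=
      hasSum_ite_eq 0 _
    have h2 : ∑' n, (if k ≤ n ∧ n ≤ L ω then D n ω / p n else 0) =
        ∑ n ∈ Finset.Icc k (L ω), (if k ≤ n ∧ n ≤ L ω then D n ω / p n else 0) := by
      refine tsum_eq_sum fun n hn => ?_
      rw [Finset.mem_Icc] at hn
      simp only [ite_eq_right_iff, and_imp]
      intro hk hl
      exact absurd ⟨hk, hl⟩ hn
    have h2' : Summable (fun n : ℕ => if k ≤ n ∧ n ≤ L ω then D n ω / p n else 0) := by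
      apply summable_of_ne_finset_zero (s := Finset.Icc k (L ω))
      intro n hn
      rw [Finset.mem_Icc] at hn
      simp only [ite_eq_right_iff, and_imp]
      intro hk hl
      exact absurd ⟨hk, hl⟩ hn
    rw [Summable.tsum_add h1.summable h2', h1.tsum_eq, h2]
    congr 1
    refine Finset.sum_congr rfl fun n hn => ?_
    rw [Finset.mem_Icc] at hn
    simp [hn.1, hn.2]
  -- compute ∫ F n via independence
  have hint2 : ∀ n, k ≤ n →
      (∫ ω, (if k ≤ n ∧ n ≤ L ω then D n ω / p n else 0) ∂μ) = g n - g (n - 1) := by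
    intro n hk
    have hpn := hpos n hk
    set I : Ω → ℝ := fun ω => if n ≤ L ω then 1 else 0 with hI
    have hindep' : ProbabilityTheory.IndepFun I (D n) μ := by
      have hφ : Measurable (fun m : ℕ => if n ≤ m then (1 : ℝ) else 0) :=
        measurable_from_top
      have hψ : Measurable (fun y : ℕ → ℝ => y n - y (n - 1)) :=
        (measurable_pi_apply n).sub (measurable_pi_apply (n - 1))
      exact hindep.comp hφ hψ
    have hIint : Integrable I μ := by
      have : I = Set.indicator {ω | n ≤ L ω} (fun _ => (1 : ℝ)) := by
        funext ω; by_cases h : n ≤ L ω <;> simp [hI, Set.indicator_apply, h]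
      rw [this]
      exact (integrable_const (1 : ℝ)).indicator (hsetmeas n)
    have hmul : (∫ ω, I ω * D n ω ∂μ) = (∫ ω, I ω ∂μ) * ∫ ω, D n ω ∂μ :=
      hindep'.integral_mul_eq_mul_integral hIint.aestronglyMeasurable (hDint n).aestronglyMeasurable
    have hIval : (∫ ω, I ω ∂μ) = p n := by
      have : I = Set.indicator {ω | n ≤ L ω} (1 : Ω → ℝ) := by
        funext ω; by_cases h : n ≤ L ω <;> simp [hI, Set.indicator_apply, h]
      rw [this, integral_indicator_one (hsetmeas n)]
      rfl
    have hDval : (∫ ω, D n ω ∂μ) = g n - g (n - 1) := by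
      rw [hD]
      simp only
      rw [integral_sub (hint n) (hint (n - 1)), hE, hE]
    have heq : (fun ω => if k ≤ n ∧ n ≤ L ω then D n ω / p n else 0) =
        fun ω => I ω * D n ω / p n := by
      funext ω
      by_cases h : n ≤ L ω <;> simp [hI, h, hk]
    rw [heq]
    rw [integral_div, hmul, hIval, hDval]
    field_simp
    exact mul_div_cancel_left₀ _ (ne_of_gt hpn)
  have hintF : ∀ n, (∫ ω, F n ω ∂μ) =
      (if n = 0 then g (k - 1) else 0) + (if k ≤ n then g n - g (n - 1) else 0) := by
    intro n
    rw [hF]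
    simp only
    rw [integral_add]
    · congr 1
      · by_cases h : n = 0 <;> simp [h, hE (k - 1)]
      · by_cases h2 : k ≤ n
        · rw [hint2 n h2, if_pos h2]
        · simp [h2]
    · by_cases h : n = 0 <;> simp [h, hint (k - 1)]
    · exact hI2 n
  -- telescoping sum
  set b : ℕ → ℝ := fun n => if k ≤ n then g n - g (n - 1) else 0 with hb
  have hbsum : Summable b := by
    refine hsum.of_norm_bounded fun n => ?_
    rw [hb, ha]
    by_cases h2 : k ≤ n
    · simp only [h2, if_true]
      have h3 : ‖g n - g (n - 1)‖ ≤ ∫ ω, |D n ω| ∂μ := by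
        have : g n - g (n - 1) = ∫ ω, D n ω ∂μ := by
          rw [hD]; simp only
          rw [integral_sub (hint n) (hint (n - 1)), hE, hE]
        rw [this]
        exact (norm_integral_le_integral_norm _).trans (le_of_eq (by simp))
      refine h3.trans ?_
      rw [le_div_iff₀ (hpos n h2)]
      exact mul_le_of_le_one_right (integral_nonneg fun ω => abs_nonneg _) (hp1 n)
    · simp [h2]
  have hbtel : ∀ N, ∑ n ∈ Finset.range (N + 1), b n =
      if k ≤ N then g N - g (k - 1) else 0 := by
    intro N
    induction N with
    | zero =>
      simp only [Finset.range_one, Finset.sum_singleton, hb]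
      by_cases h : k ≤ 0
      · have : k = 0 := Nat.le_zero.mp h
        simp [this]
      · simp [h]
    | succ N ih =>
      rw [Finset.sum_range_succ, ih, hb]
      by_cases h1 : k ≤ N
      · have h2 : k ≤ N + 1 := h1.trans (Nat.le_succ N)
        simp only [h1, h2, if_true, Nat.add_sub_cancel]
        ring
      · by_cases h2 : k ≤ N + 1
        · have hk : k = N + 1 := by omega
          subst hk
          simp [Nat.not_succ_le_self]
        · simp [h1, h2]
  have hbtsum : ∑' n, b n = f - g (k - 1) := by
    have ht1 : Tendsto (fun N => ∑ n ∈ Finset.range (N + 1), b n) atTop (nhds (∑' n, b n)) :=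
      hbsum.hasSum.tendsto_sum_nat.comp (tendsto_add_atTop_nat 1)
    have ht2 : Tendsto (fun N => ∑ n ∈ Finset.range (N + 1), b n) atTop
        (nhds (f - g (k - 1))) := by
      refine Tendsto.congr' ?_ (hlim.sub_const (g (k - 1)))
      filter_upwards [eventually_ge_atTop k] with N hN
      rw [hbtel N, if_pos hN]
    exact tendsto_nhds_unique ht1 ht2
  -- put everything together
  calc (∫ ω, (Y (k - 1) ω + ∑ n ∈ Finset.Icc k (L ω), D n ω / p n) ∂μ)
      = ∫ ω, ∑' n, F n ω ∂μ := by
        exact integral_congr_ae (Eventually.of_forall hpt)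
    _ = ∑' n, ∫ ω, F n ω ∂μ :=
        (integral_tsum_of_summable_integral_norm hFint hnormsum).symm
    _ = ∑' n, ((if n = 0 then g (k - 1) else 0) + b n) := by
        exact tsum_congr fun n => hintF n
    _ = g (k - 1) + (f - g (k - 1)) := by
        rw [Summable.tsum_add (hasSum_ite_eq 0 _).summable hbsum, (hasSum_ite_eq 0 _).tsum_eq, hbtsum]
    _ = f := by ring
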